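/- (Output error evaluation, first corrected output.) In the goal-oriented setting with coercivity constants α_A ≥ α_{A,LB} > 0 and α_G ≥ α_{G,LB} > 0, define the corrected output error at final time by sᴺ − s^{N_s,N} := lᵀ eᴺ − Δt·∑_{n=0}^{N−1} (r^{n+1})ᵀ Ψ̃ⁿ. Then |sᴺ − s^{N_s,N}| ≤ Δt·( ∑_{n=1}^{N} ‖rⁿ‖₋₁² )^{1/2} · Δ_du^N, where Δ_du^N := ( ((T + Δt)/(α_{G,LB}·α_{A,LB}))·∑_{m=0}^{N−1} ‖ϱᵐ‖₋₁² )^{1/2} and T = N·Δt. -/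

import Mathlib

open Matrix BigOperators Finset

/-- The energy norm `‖v‖_{G*} = √(vᵀ G* v)` induced by a matrix `G`. -/
noncomputable def normG {d : ℕ} (G : Matrix (Fin d) (Fin d) ℝ) (v : Fin d → ℝ) : ℝ :=
  Real.sqrt (v ⬝ᵥ G.mulVec v)

/-- The dual norm `‖r‖₋₁ = sup_{v ≠ 0} (rᵀ v)/‖v‖_{G*}`. -/
noncomputable def dualNorm {d : ℕ} (G : Matrix (Fin d) (Fin d) ℝ) (r : Fin d → ℝ) : ℝ :=
  ⨆ v : {v : Fin d → ℝ // v ≠ 0}, (r ⬝ᵥ (v : Fin d → ℝ)) / normG G (v : Fin d → ℝ)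

/-- The symmetric part `(A + Aᵀ)/2` of a matrix. -/
noncomputable def symPart {d : ℕ} (A : Matrix (Fin d) (Fin d) ℝ) : Matrix (Fin d) (Fin d) ℝ :=
  ((1 : ℝ)/2) • (A + Aᵀ)

section aux
variable {d : ℕ}

lemma dot_mulVec_comm (B : Matrix (Fin d) (Fin d) ℝ) (x y : Fin d → ℝ) :
    x ⬝ᵥ B.mulVec y = y ⬝ᵥ Bᵀ.mulVec x := by
  rw [dotProduct_mulVec, ← mulVec_transpose, dotProduct_comm]

lemma herm_symm {B : Matrix (Fin d) (Fin d) ℝ} (hB : B.IsHermitian) : Bᵀ = B := by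
  ext i j
  have h := congrFun (congrFun hB i) j
  simpa using h

lemma psd_nonneg {B : Matrix (Fin d) (Fin d) ℝ} (hB : B.PosSemidef) (v : Fin d → ℝ) :
    0 ≤ v ⬝ᵥ B.mulVec v := by simpa using hB.dotProduct_mulVec_nonneg v

lemma psd_cs {B : Matrix (Fin d) (Fin d) ℝ} (hB : B.PosSemidef) (u v : Fin d → ℝ) :
    (u ⬝ᵥ B.mulVec v)^2 ≤ (u ⬝ᵥ B.mulVec u) * (v ⬝ᵥ B.mulVec v) := by
  have hs : Bᵀ = B := herm_symm hB.1
  set a := u ⬝ᵥ B.mulVec u with ha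
  set b := u ⬝ᵥ B.mulVec v with hb
  set c := v ⬝ᵥ B.mulVec v with hc
  have hvu : v ⬝ᵥ B.mulVec u = b := by rw [dot_mulVec_comm, hs]
  have hq : ∀ t : ℝ, 0 ≤ a + 2*t*b + t^2*c := by
    intro t
    have h0 := psd_nonneg hB (u + t • v)
    have hexp : (u + t • v) ⬝ᵥ B.mulVec (u + t • v) = a + 2*t*b + t^2*c := by
      rw [mulVec_add, mulVec_smul, add_dotProduct, smul_dotProduct,
        dotProduct_add, dotProduct_add, dotProduct_smul, dotProduct_smul,
        smul_eq_mul, smul_eq_mul, smul_eq_mul, hvu, ← ha, ← hc]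
      ring
    linarith [hexp ▸ h0]
  have hc0 : 0 ≤ c := psd_nonneg hB v
  rcases hc0.lt_or_eq with hcpos | hceq
  · have h1 := hq (-(b/c))
    have h2 : a + 2*(-(b/c))*b + (-(b/c))^2*c = a - b^2/c := by
      field_simp; ring
    rw [h2] at h1
    have := (div_le_iff₀ hcpos).mp (by linarith : b^2/c ≤ a)
    linarith
  · have hb0 : b = 0 := by
      by_contra hbne
      have h1 := hq (-(a+1)/(2*b))
      have h2 : a + 2*(-(a+1)/(2*b))*b + (-(a+1)/(2*b))^2*c = -1 + (-(a+1)/(2*b))^2*c := by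
        field_simp; ring
      rw [h2, ← hceq] at h1
      simp at h1; linarith
    have ha0 : 0 ≤ a := psd_nonneg hB u
    rw [hb0, ← hceq]
    simp

lemma normG_nonneg {G : Matrix (Fin d) (Fin d) ℝ} (v : Fin d → ℝ) : 0 ≤ normG G v :=
  Real.sqrt_nonneg _

lemma normG_sq {G : Matrix (Fin d) (Fin d) ℝ} (hG : G.PosDef) (v : Fin d → ℝ) :
    (normG G v)^2 = v ⬝ᵥ G.mulVec v :=
  Real.sq_sqrt (psd_nonneg hG.posSemidef v)

lemma normG_neg (G : Matrix (Fin d) (Fin d) ℝ) (v : Fin d → ℝ) :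
    normG G (-v) = normG G v := by
  simp [normG, mulVec_neg]

lemma normG_pos {G : Matrix (Fin d) (Fin d) ℝ} (hG : G.PosDef) {v : Fin d → ℝ} (hv : v ≠ 0) :
    0 < normG G v := by
  apply Real.sqrt_pos.mpr
  simpa using hG.dotProduct_mulVec_pos hv

lemma dualNorm_bddAbove {G : Matrix (Fin d) (Fin d) ℝ} (hG : G.PosDef) (r : Fin d → ℝ) :
    BddAbove (Set.range fun v : {v : Fin d → ℝ // v ≠ 0} =>
      (r ⬝ᵥ (v : Fin d → ℝ)) / normG G (v : Fin d → ℝ)) := by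
  classical
  have hs : Gᵀ = G := herm_symm hG.1
  set u := G⁻¹.mulVec r with hu
  refine ⟨normG G u, ?_⟩
  rintro x ⟨v, rfl⟩
  have hvpos : 0 < normG G (v : Fin d → ℝ) := normG_pos hG v.2
  rw [div_le_iff₀ hvpos]
  have hkey : r ⬝ᵥ (v : Fin d → ℝ) = u ⬝ᵥ G.mulVec (v : Fin d → ℝ) := by
    rw [dotProduct_mulVec, ← mulVec_transpose, hs, hu, mulVec_mulVec,
      Matrix.mul_nonsing_inv _ (isUnit_iff_ne_zero.mpr hG.det_pos.ne'), one_mulVec]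
  rw [hkey]
  have hcs := psd_cs hG.posSemidef u (v : Fin d → ℝ)
  have h1 : u ⬝ᵥ G.mulVec (v : Fin d → ℝ) ≤ |u ⬝ᵥ G.mulVec (v : Fin d → ℝ)| := le_abs_self _
  calc u ⬝ᵥ G.mulVec (v : Fin d → ℝ) ≤ Real.sqrt ((u ⬝ᵥ G.mulVec (v:Fin d → ℝ))^2) := by
        rw [Real.sqrt_sq_eq_abs]; exact h1
    _ ≤ Real.sqrt ((u ⬝ᵥ G.mulVec u) * ((v:Fin d → ℝ) ⬝ᵥ G.mulVec (v:Fin d → ℝ))) :=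
        Real.sqrt_le_sqrt hcs
    _ = normG G u * normG G (v : Fin d → ℝ) := by
        rw [Real.sqrt_mul (psd_nonneg hG.posSemidef u)]; rfl

lemma dualNorm_nonneg (hd : 1 ≤ d) {G : Matrix (Fin d) (Fin d) ℝ} (hG : G.PosDef)
    (r : Fin d → ℝ) : 0 ≤ dualNorm G r := by
  have hv0 : (fun _ : Fin d => (1:ℝ)) ≠ 0 := by
    intro h
    have := congrFun h ⟨0, hd⟩
    simp at this
  set v0 : Fin d → ℝ := fun _ => 1 with hv0def
  rcases le_or_gt 0 (r ⬝ᵥ v0) with h | h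
  · have := le_ciSup (dualNorm_bddAbove hG r) (⟨v0, hv0⟩ : {v : Fin d → ℝ // v ≠ 0})
    refine le_trans ?_ this
    exact div_nonneg h (normG_nonneg _)
  · have hneg : (-v0) ≠ 0 := by simpa using hv0
    have := le_ciSup (dualNorm_bddAbove hG r) (⟨-v0, hneg⟩ : {v : Fin d → ℝ // v ≠ 0})
    refine le_trans ?_ this
    simp only [dotProduct_neg, normG_neg]
    exact div_nonneg (by linarith) (normG_nonneg _)

lemma dot_le_dualNorm (hd : 1 ≤ d) {G : Matrix (Fin d) (Fin d) ℝ} (hG : G.PosDef)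
    (r v : Fin d → ℝ) : r ⬝ᵥ v ≤ dualNorm G r * normG G v := by
  by_cases hv : v = 0
  · subst hv
    simp [normG]
    -- goal : r ⬝ᵥ 0 ≤ dualNorm G r * √(0 ⬝ᵥ G *ᵥ 0) ; simplifies
  · have hvpos : 0 < normG G v := normG_pos hG hv
    have h1 := le_ciSup (dualNorm_bddAbove hG r) (⟨v, hv⟩ : {v : Fin d → ℝ // v ≠ 0})
    have : r ⬝ᵥ v / normG G v ≤ dualNorm G r := h1
    calc r ⬝ᵥ v = (r ⬝ᵥ v / normG G v) * normG G v := by field_simp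
      _ ≤ dualNorm G r * normG G v := mul_le_mul_of_nonneg_right this hvpos.le

end aux

theorem stmt15 {d : ℕ} (hd : 1 ≤ d)
    (M A S G : Matrix (Fin d) (Fin d) ℝ) (hM : M.PosSemidef) (hS : S.IsSymm)
    (Δt : ℝ) (hΔt : 0 < Δt)
    (hGdef : G = M + Δt • S) (hG : G.PosDef)
    (N : ℕ) (hN : 1 ≤ N)
    (αA αALB : ℝ) (hαALB : 0 < αALB) (hαALBle : αALB ≤ αA)
    (hcoA : ∀ v : Fin d → ℝ, αA * (normG G v)^2 ≤ v ⬝ᵥ (symPart A).mulVec v)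
    (αG αGLB : ℝ) (hαGLB : 0 < αGLB) (hαGLBle : αGLB ≤ αG)
    (hcoG : ∀ v : Fin d → ℝ,
      αG * (normG G v)^2 ≤ v ⬝ᵥ (M + Δt • symPart A).mulVec v)
    (e r : ℕ → Fin d → ℝ) (he0 : e 0 = 0)
    (hprimal : ∀ k, 1 ≤ k → k ≤ N →
      (M + Δt • A).mulVec (e k) = M.mulVec (e (k - 1)) - Δt • r k)
    (l : Fin d → ℝ)
    (Ψ Ψt : ℕ → Fin d → ℝ)
    (hΨN : M.mulVec (Ψ N) = -l)
    (hΨ : ∀ k, k < N → (M + Δt • Aᵀ).mulVec (Ψ k) = M.mulVec (Ψ (k + 1)))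
    (hΨtN : Ψt N = Ψ N)
    (ε ϱ : ℕ → Fin d → ℝ)
    (hε : ∀ k, ε k = Ψ k - Ψt k)
    (hϱ : ∀ k, k < N →
      ϱ k = (1 / Δt) • ((M + Δt • Aᵀ).mulVec (Ψt k) - M.mulVec (Ψt (k + 1)))) :
    |l ⬝ᵥ e N - Δt * ∑ k ∈ Finset.range N, r (k + 1) ⬝ᵥ Ψt k| ≤
      Δt * Real.sqrt (∑ k ∈ Finset.Icc 1 N, (dualNorm G (r k))^2) *
        Real.sqrt (((N * Δt + Δt) / (αGLB * αALB)) *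
          ∑ m ∈ Finset.range N, (dualNorm G (ϱ m))^2) := by
  classical
  have hαA : (0:ℝ) < αA := lt_of_lt_of_le hαALB hαALBle
  have hαG : (0:ℝ) < αG := lt_of_lt_of_le hαGLB hαGLBle
  have hMsym : Mᵀ = M := herm_symm hM.1
  -- quadratic form of symPart equals that of A and of Aᵀ
  have hsymQ : ∀ v : Fin d → ℝ, v ⬝ᵥ (symPart A).mulVec v = v ⬝ᵥ Aᵀ.mulVec v := by
    intro v
    have h1 : v ⬝ᵥ Aᵀ.mulVec v = v ⬝ᵥ A.mulVec v := by
      rw [dot_mulVec_comm Aᵀ v v, transpose_transpose]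
    simp only [symPart, smul_mulVec, add_mulVec, dotProduct_smul,
      dotProduct_add, smul_eq_mul, h1]
    ring
  -- dual error recursion and final condition
  have hεN : ε N = 0 := by rw [hε, hΨtN, sub_self]
  have hrec : ∀ k, k < N →
      (M + Δt • Aᵀ).mulVec (ε k) = M.mulVec (ε (k+1)) - Δt • ϱ k := by
    intro k hk
    have hq : Δt • ϱ k = (M + Δt • Aᵀ).mulVec (Ψt k) - M.mulVec (Ψt (k + 1)) := by
      rw [hϱ k hk, smul_smul, mul_one_div, div_self hΔt.ne', one_smul]
    rw [hε, hε, mulVec_sub, mulVec_sub, hΨ k hk, hq]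
    abel
  -- abbreviations
  set En : ℕ → ℝ := fun n => ε n ⬝ᵥ M.mulVec (ε n) with hEn
  set Qn : ℕ → ℝ := fun n => ε n ⬝ᵥ (symPart A).mulVec (ε n) with hQn
  set ρ : ℕ → ℝ := fun n => (dualNorm G (ϱ n))^2 with hρ
  have hQnonneg : ∀ n, 0 ≤ Qn n := fun n =>
    le_trans (mul_nonneg hαA.le (sq_nonneg _)) (hcoA (ε n))
  have hρnonneg : ∀ n, 0 ≤ ρ n := fun n => sq_nonneg _
  have hEnonneg : ∀ n, 0 ≤ En n := fun n => psd_nonneg hM (ε n)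
  have hENzero : En N = 0 := by simp [hEn, hεN]
  -- per-step estimate (scaled by αA)
  have hstep : ∀ n, n < N →
      αA * En n + αA * Δt * Qn n ≤ αA * En (n+1) + Δt * ρ n := by
    intro n hn
    set a := dualNorm G (ϱ n) with hadef
    set b := normG G (ε n) with hbdef
    -- energy identity
    have hid : En n + Δt * Qn n = ε n ⬝ᵥ M.mulVec (ε (n+1)) - Δt * (ϱ n ⬝ᵥ ε n) := by
      have h0 := congrArg (fun w => ε n ⬝ᵥ w) (hrec n hn)
      simp only [add_mulVec, smul_mulVec, dotProduct_add, dotProduct_smul,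
        smul_eq_mul, dotProduct_sub] at h0
      rw [hEn, hQn]
      simp only []
      rw [hsymQ (ε n)]
      rw [dotProduct_comm (ϱ n) (ε n)]
      linarith [h0]
    -- cross term bound
    have hcross : ε n ⬝ᵥ M.mulVec (ε (n+1)) ≤ En n / 2 + En (n+1) / 2 := by
      have h0 := psd_nonneg hM (ε n - ε (n+1))
      have hsw : ε (n+1) ⬝ᵥ M.mulVec (ε n) = ε n ⬝ᵥ M.mulVec (ε (n+1)) := by
        rw [dot_mulVec_comm, hMsym]
      simp only [mulVec_sub, dotProduct_sub, sub_dotProduct] at h0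
      rw [hsw] at h0
      simp only [hEn]
      linarith [h0]
    -- dual pairing bound
    have hdual : -(ϱ n ⬝ᵥ ε n) ≤ a * b := by
      have := dot_le_dualNorm hd hG (ϱ n) (-(ε n))
      rwa [dotProduct_neg, normG_neg] at this
    -- Young + coercivity (αA * a * b ≤ ρ n / 2 + αA * Qn n / 2)
    have hyoung : αA * (a * b) ≤ ρ n / 2 + αA * Qn n / 2 := by
      have hco := mul_le_mul_of_nonneg_left (hcoA (ε n)) hαA.le
      have hsq := sq_nonneg (a - αA * b)
      rw [hρ]
      simp only []
      nlinarith [hco, hsq]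
    have h1 := mul_le_mul_of_nonneg_left hcross hαA.le
    have h2 := mul_le_mul_of_nonneg_left hdual (mul_nonneg hΔt.le hαA.le)
    have h3 := mul_le_mul_of_nonneg_left hyoung hΔt.le
    have h4 := congrArg (fun x => αA * x) hid
    beta_reduce at h4
    nlinarith [h1, h2, h3]
  -- telescoped estimate
  have htel : ∀ j, j ≤ N →
      αA * En (N - j) + αA * Δt * (∑ m ∈ Finset.Ico (N - j) N, Qn m) ≤
        Δt * ∑ m ∈ Finset.Ico (N - j) N, ρ m := by
    intro j
    induction j with
    | zero => intro _; simp [hENzero]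
    | succ j ih =>
      intro hj
      have hjN : j ≤ N := by omega
      have hn : N - (j+1) < N := by omega
      have hn1 : N - (j+1) + 1 = N - j := by omega
      have hsQ : ∑ m ∈ Finset.Ico (N - (j+1)) N, Qn m =
          Qn (N - (j+1)) + ∑ m ∈ Finset.Ico (N - (j+1) + 1) N, Qn m :=
        Finset.sum_eq_sum_Ico_succ_bot hn _
      have hsρ : ∑ m ∈ Finset.Ico (N - (j+1)) N, ρ m =
          ρ (N - (j+1)) + ∑ m ∈ Finset.Ico (N - (j+1) + 1) N, ρ m :=
        Finset.sum_eq_sum_Ico_succ_bot hn _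
      have h1 := hstep (N - (j+1)) hn
      have h2 := ih hjN
      rw [← hn1] at h2
      rw [hsQ, hsρ]
      linarith [h1, h2]
  -- pointwise bound on normG (ε n)^2
  set P : ℝ := ∑ m ∈ Finset.range N, ρ m with hP
  have hPnonneg : 0 ≤ P := Finset.sum_nonneg fun m _ => hρnonneg m
  have hpoint : ∀ n, n < N → αG * αA * (normG G (ε n))^2 ≤ Δt * P := by
    intro n hn
    have hco := hcoG (ε n)
    have hcoE : ε n ⬝ᵥ (M + Δt • symPart A).mulVec (ε n) = En n + Δt * Qn n := by
      simp only [add_mulVec, smul_mulVec, dotProduct_add, dotProduct_smul,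
        smul_eq_mul, hEn, hQn]
    rw [hcoE] at hco
    -- bound En (n+1)
    have htel1 := htel (N - (n+1)) (by omega)
    have hNn1 : N - (N - (n+1)) = n+1 := by omega
    rw [hNn1] at htel1
    have hsumQ : 0 ≤ αA * Δt * (∑ m ∈ Finset.Ico (n+1) N, Qn m) :=
      mul_nonneg (mul_nonneg hαA.le hΔt.le) (Finset.sum_nonneg fun m _ => hQnonneg m)
    have hE1 : αA * En (n+1) ≤ Δt * ∑ m ∈ Finset.Ico (n+1) N, ρ m := by linarith
    have hstepn := hstep n hn
    -- combine
    have hchain : αA * (En n + Δt * Qn n) ≤ Δt * ∑ m ∈ Finset.Ico n N, ρ m := by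
      have hs : ∑ m ∈ Finset.Ico n N, ρ m = ρ n + ∑ m ∈ Finset.Ico (n+1) N, ρ m :=
        Finset.sum_eq_sum_Ico_succ_bot hn _
      rw [hs]; nlinarith [hstepn, hE1]
    have hsub : ∑ m ∈ Finset.Ico n N, ρ m ≤ P := by
      rw [hP, Finset.range_eq_Ico]
      exact Finset.sum_le_sum_of_subset_of_nonneg
        (Finset.Ico_subset_Ico (Nat.zero_le n) le_rfl) (fun m _ _ => hρnonneg m)
    have hcoscaled := mul_le_mul_of_nonneg_left hco hαA.le
    calc αG * αA * (normG G (ε n))^2 = αA * (αG * (normG G (ε n))^2) := by ring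
      _ ≤ αA * (En n + Δt * Qn n) := hcoscaled
      _ ≤ Δt * ∑ m ∈ Finset.Ico n N, ρ m := hchain
      _ ≤ Δt * P := mul_le_mul_of_nonneg_left hsub hΔt.le
  -- sum of squared energy norms of ε
  have hsumN : ∑ n ∈ Finset.range N, (normG G (ε n))^2 ≤ (N : ℝ) * (Δt * P / (αG * αA)) := by
    have hb : ∀ n ∈ Finset.range N, (normG G (ε n))^2 ≤ Δt * P / (αG * αA) := by
      intro n hn
      rw [le_div_iff₀ (mul_pos hαG hαA)]
      have := hpoint n (Finset.mem_range.mp hn)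
      nlinarith [this]
    calc ∑ n ∈ Finset.range N, (normG G (ε n))^2
        ≤ ∑ n ∈ Finset.range N, (Δt * P / (αG * αA)) := Finset.sum_le_sum hb
      _ = (N : ℝ) * (Δt * P / (αG * αA)) := by
          rw [Finset.sum_const, Finset.card_range, nsmul_eq_mul]
  -- output identity: l ⬝ᵥ e N = Δt * ∑ r(k+1) ⬝ᵥ Ψ k
  have hout : ∀ n, n ≤ N →
      Ψ n ⬝ᵥ M.mulVec (e n) = -(Δt * ∑ k ∈ Finset.range n, r (k+1) ⬝ᵥ Ψ k) := by
    intro n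
    induction n with
    | zero => intro _; simp [he0]
    | succ n ih =>
      intro hn
      have hnN : n ≤ N := by omega
      have hp := hprimal (n+1) (by omega) hn
      simp only [Nat.add_sub_cancel] at hp
      have hdual := hΨ n (by omega)
      have h1 : Ψ (n+1) ⬝ᵥ M.mulVec (e (n+1)) = e (n+1) ⬝ᵥ M.mulVec (Ψ (n+1)) := by
        rw [dot_mulVec_comm, hMsym]
      have h2 : e (n+1) ⬝ᵥ (M + Δt • Aᵀ).mulVec (Ψ n) = Ψ n ⬝ᵥ (M + Δt • A).mulVec (e (n+1)) := by
        rw [dot_mulVec_comm]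
        congr 2
        rw [transpose_add, transpose_smul, transpose_transpose, hMsym]
      rw [h1, ← hdual, h2, hp, dotProduct_sub, dotProduct_smul, smul_eq_mul,
        ih hnN, Finset.sum_range_succ]
      rw [dotProduct_comm (Ψ n) (r (n+1))]
      ring
  have hlid : l ⬝ᵥ e N = Δt * ∑ k ∈ Finset.range N, r (k+1) ⬝ᵥ Ψ k := by
    have h1 : l = -(M.mulVec (Ψ N)) := by rw [hΨN]; simp
    rw [h1, neg_dotProduct, dotProduct_comm, dot_mulVec_comm, hMsym, hout N le_rfl]
    ring
  -- rewrite the error as Δt * ∑ r(k+1) ⬝ᵥ ε k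
  have herr : l ⬝ᵥ e N - Δt * ∑ k ∈ Finset.range N, r (k + 1) ⬝ᵥ Ψt k =
      Δt * ∑ k ∈ Finset.range N, r (k+1) ⬝ᵥ ε k := by
    rw [hlid, ← mul_sub, ← Finset.sum_sub_distrib]
    congr 1
    apply Finset.sum_congr rfl
    intro k _
    rw [hε, dotProduct_sub]
  rw [herr]
  -- bound each term and apply Cauchy-Schwarz
  set a : ℕ → ℝ := fun k => dualNorm G (r (k+1)) with hadef
  set b : ℕ → ℝ := fun k => normG G (ε k) with hbdef
  have habs : |∑ k ∈ Finset.range N, r (k+1) ⬝ᵥ ε k| ≤ ∑ k ∈ Finset.range N, a k * b k := by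
    calc |∑ k ∈ Finset.range N, r (k+1) ⬝ᵥ ε k| ≤ ∑ k ∈ Finset.range N, |r (k+1) ⬝ᵥ ε k| :=
        Finset.abs_sum_le_sum_abs _ _
      _ ≤ ∑ k ∈ Finset.range N, a k * b k := by
          apply Finset.sum_le_sum
          intro k _
          rw [abs_le]
          constructor
          · have := dot_le_dualNorm hd hG (r (k+1)) (-(ε k))
            rw [dotProduct_neg, normG_neg] at this
            linarith
          · exact dot_le_dualNorm hd hG (r (k+1)) (ε k)
  have hcs : ∑ k ∈ Finset.range N, a k * b k ≤
      Real.sqrt (∑ k ∈ Finset.range N, (a k)^2) * Real.sqrt (∑ k ∈ Finset.range N, (b k)^2) := by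
    have h0 : 0 ≤ ∑ k ∈ Finset.range N, a k * b k :=
      Finset.sum_nonneg fun k _ => mul_nonneg (dualNorm_nonneg hd hG _) (normG_nonneg _)
    have h1 := Finset.sum_mul_sq_le_sq_mul_sq (Finset.range N) a b
    calc ∑ k ∈ Finset.range N, a k * b k
        = Real.sqrt ((∑ k ∈ Finset.range N, a k * b k)^2) := (Real.sqrt_sq h0).symm
      _ ≤ Real.sqrt ((∑ k ∈ Finset.range N, (a k)^2) * ∑ k ∈ Finset.range N, (b k)^2) :=
          Real.sqrt_le_sqrt h1
      _ = _ := Real.sqrt_mul (Finset.sum_nonneg fun k _ => sq_nonneg _) _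
  -- reindex the r-sum
  have hreidx : ∑ k ∈ Finset.range N, (a k)^2 = ∑ k ∈ Finset.Icc 1 N, (dualNorm G (r k))^2 := by
    rw [← Finset.Ico_add_one_right_eq_Icc, Finset.sum_Ico_eq_sum_range]
    simp only [Nat.add_sub_cancel]
    apply Finset.sum_congr rfl
    intro k _
    rw [add_comm 1 k]
  -- bound the b-sum
  have hbbound : ∑ k ∈ Finset.range N, (b k)^2 ≤ ((N : ℝ) * Δt + Δt) / (αGLB * αALB) * P := by
    refine le_trans hsumN ?_
    have hc1 : (0:ℝ) < αGLB * αALB := mul_pos hαGLB hαALB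
    have hc2 : αGLB * αALB ≤ αG * αA := mul_le_mul hαGLBle hαALBle hαALB.le hαG.le
    have hc3 : (N:ℝ) * Δt ≤ (N:ℝ) * Δt + Δt := by linarith
    have hdiv : (N:ℝ) * Δt / (αG * αA) ≤ ((N:ℝ) * Δt + Δt) / (αGLB * αALB) :=
      div_le_div₀ (by positivity) hc3 hc1 hc2
    calc (N : ℝ) * (Δt * P / (αG * αA)) = ((N:ℝ) * Δt / (αG * αA)) * P := by ring
      _ ≤ (((N:ℝ) * Δt + Δt) / (αGLB * αALB)) * P :=
          mul_le_mul_of_nonneg_right hdiv hPnonneg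
  -- finish
  rw [abs_mul, abs_of_pos hΔt, mul_assoc]
  apply mul_le_mul_of_nonneg_left _ hΔt.le
  calc |∑ k ∈ Finset.range N, r (k+1) ⬝ᵥ ε k|
      ≤ Real.sqrt (∑ k ∈ Finset.range N, (a k)^2) * Real.sqrt (∑ k ∈ Finset.range N, (b k)^2) :=
        le_trans habs hcs
    _ ≤ Real.sqrt (∑ k ∈ Finset.Icc 1 N, (dualNorm G (r k))^2) *
        Real.sqrt (((N : ℝ) * Δt + Δt) / (αGLB * αALB) * P) := by
        apply mul_le_mul
        · rw [hreidx]
        · exact Real.sqrt_le_sqrt hbbound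
        · exact Real.sqrt_nonneg _
        · exact Real.sqrt_nonneg _
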